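/- Let G be a group satisfying the minimal condition on centralizers (an M_C-group) and let H ≤ G be an α-hypercentral subgroup for some ordinal α. Then E_{α+1}(H) is solvable. -/

import Mathlib

open Ordinal

section Defs
variable {G : Type*} [Group G]

attribute [local instance] Classical.propDecidable

/-- The commutator `[x,y] = x⁻¹y⁻¹xy` as in the paper. -/
def pcomm (x y : G) : G := x⁻¹ * y⁻¹ * x * y

/-- Transfinite upper central series of the (sub)set `E` of `G`, viewed inside `G`. -/
noncomputable def ZSet (E : Set G) (α : Ordinal) : Set G :=
  if α = 0 then {1}
  else if hs : ∃ β < α, α = β + 1 then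
    {x | x ∈ E ∧ ∀ g ∈ E, pcomm x g ∈ ZSet E hs.choose}
  else ⋃ (β : Ordinal) (_ : β < α), ZSet E β
termination_by α
decreasing_by all_goals first | assumption | exact hs.choose_spec.1

/-- Transfinite iterated centralizers `C_E^α(H)` of `H` inside the ambient set `E ⊆ G`. -/
noncomputable def CIter (E H : Set G) (α : Ordinal) : Set G :=
  if α = 0 then {1}
  else if hs : ∃ β < α, α = β + 1 then
    {x | x ∈ E ∧ (∀ β < α, ∀ a : G, a ∈ CIter E H β ↔ x * a * x⁻¹ ∈ CIter E H β)
       ∧ ∀ h ∈ H, pcomm x h ∈ CIter E H hs.choose}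
  else ⋃ (β : Ordinal) (_ : β < α), CIter E H β
termination_by α
decreasing_by all_goals first | assumption | exact hs.choose_spec.1

/-- Transfinite envelopes `E_α(H)` of `H ⊆ G`. -/
noncomputable def Env (H : Set G) (α : Ordinal) : Set G :=
  if α = 0 then Set.univ
  else if hs : ∃ β < α, α = β + 1 then
    {g | g ∈ Env H hs.choose ∧
      ∀ c ∈ CIter (Env H hs.choose) H (hs.choose + 1),
        pcomm g c ∈ CIter (Env H hs.choose) H hs.choose}
  else ⋂ (β : Ordinal) (_ : β < α), Env H β
termination_by α
decreasing_by all_goals first | assumption | exact hs.choose_spec.1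

end Defs

section Aux

variable {G : Type*} [Group G]

/-! ### Ordinal helpers -/

lemma ord_lt_succ (a : Ordinal) : a < a + 1 := by
  rw [Ordinal.add_one_eq_succ]; exact Order.lt_succ a

lemma ord_succ_ne_zero (a : Ordinal) : a + 1 ≠ 0 :=
  fun h => absurd (h ▸ ord_lt_succ a) ((by simp : ¬ a < 0))

lemma ord_lt_succ_iff {a b : Ordinal} : a < b + 1 ↔ a ≤ b := by
  rw [Ordinal.add_one_eq_succ, Order.lt_succ_iff]

lemma ord_succ_inj {a b : Ordinal} (h : a + 1 = b + 1) : a = b := by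
  simp only [Ordinal.add_one_eq_succ] at h; exact Order.succ_eq_succ_iff.mp h

lemma ord_succ_ex (β : Ordinal) : ∃ γ < β + 1, β + 1 = γ + 1 :=
  ⟨β, ord_lt_succ β, rfl⟩

lemma ord_not_succ_of_limit {l : Ordinal} (h : Order.IsSuccLimit l) : ¬ ∃ γ < l, l = γ + 1 := by
  rintro ⟨γ, hγ, rfl⟩
  exact absurd (h.succ_lt hγ) (by simp)

lemma ord_choose_eq {β : Ordinal} (hs : ∃ γ < β + 1, β + 1 = γ + 1) : hs.choose = β :=
  (ord_succ_inj hs.choose_spec.2.symm)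

/-! ### pcomm identities (free-group identities, provable by `group`) -/

lemma pcomm_def (x y : G) : pcomm x y = x⁻¹ * y⁻¹ * x * y := rfl

@[simp] lemma pcomm_inv (x y : G) : (pcomm x y)⁻¹ = pcomm y x := by
  unfold pcomm; group

@[simp] lemma pcomm_one_left (h : G) : pcomm 1 h = 1 := by unfold pcomm; group

lemma pcomm_mul_left (x y c : G) :
    pcomm (x * y) c = (y⁻¹ * (pcomm x c) * y) * (pcomm y c) := by unfold pcomm; group

lemma pcomm_conj (x a h : G) :
    pcomm (x * a * x⁻¹) h = x * (pcomm a (x⁻¹ * h * x)) * x⁻¹ := by unfold pcomm; group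

lemma pcomm_mul_right (c a b : G) :
    pcomm c (a * b) = (pcomm c b) * (b⁻¹ * (pcomm c a) * b) := by unfold pcomm; group

lemma pcomm_right_conj (c x y : G) :
    pcomm c (x⁻¹ * y * x) = x⁻¹ * (pcomm (x * c * x⁻¹) y) * x := by unfold pcomm; group

lemma pcomm_right_inv (c g : G) : pcomm c g⁻¹ = g * (pcomm g c) * g⁻¹ := by unfold pcomm; group

lemma pcomm_inv_left (x c : G) : pcomm x⁻¹ c = (pcomm x (x * c * x⁻¹))⁻¹ := by unfold pcomm; group

lemma pcomm_inv_left' (x h : G) : pcomm x⁻¹ h = x * (pcomm x h)⁻¹ * x⁻¹ := by unfold pcomm; group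

lemma conj_eq_mul_pcomm (a g : G) : g⁻¹ * a * g = a * (pcomm a g) := by unfold pcomm; group

/-! ### Unfolding lemmas for `CIter`, `ZSet`, `Env` -/

lemma CIter_zero (E H : Set G) : CIter E H 0 = {1} := by rw [CIter]; simp

lemma CIter_succ (E H : Set G) (β : Ordinal) :
    CIter E H (β + 1) = {x | x ∈ E ∧
      (∀ γ < β + 1, ∀ a : G, a ∈ CIter E H γ ↔ x * a * x⁻¹ ∈ CIter E H γ)
      ∧ ∀ h ∈ H, pcomm x h ∈ CIter E H β} := by
  rw [CIter, if_neg (ord_succ_ne_zero β), dif_pos (ord_succ_ex β)]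
  rw [ord_choose_eq (ord_succ_ex β)]

lemma mem_CIter_succ {E H : Set G} {β : Ordinal} {x : G} :
    x ∈ CIter E H (β + 1) ↔ x ∈ E ∧
      (∀ γ < β + 1, ∀ a : G, a ∈ CIter E H γ ↔ x * a * x⁻¹ ∈ CIter E H γ)
      ∧ ∀ h ∈ H, pcomm x h ∈ CIter E H β := by
  rw [CIter_succ]; rfl

lemma CIter_limit (E H : Set G) {l : Ordinal} (hl : Order.IsSuccLimit l) :
    CIter E H l = ⋃ (β : Ordinal) (_ : β < l), CIter E H β := by
  rw [CIter, if_neg hl.pos.ne', dif_neg (ord_not_succ_of_limit hl)]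

lemma mem_CIter_limit {E H : Set G} {l : Ordinal} (hl : Order.IsSuccLimit l) {x : G} :
    x ∈ CIter E H l ↔ ∃ β < l, x ∈ CIter E H β := by
  rw [CIter_limit E H hl]; simp

lemma ZSet_zero (E : Set G) : ZSet E 0 = {1} := by rw [ZSet]; simp

lemma ZSet_succ (E : Set G) (β : Ordinal) :
    ZSet E (β + 1) = {x | x ∈ E ∧ ∀ g ∈ E, pcomm x g ∈ ZSet E β} := by
  rw [ZSet, if_neg (ord_succ_ne_zero β), dif_pos (ord_succ_ex β)]
  rw [ord_choose_eq (ord_succ_ex β)]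

lemma ZSet_limit (E : Set G) {l : Ordinal} (hl : Order.IsSuccLimit l) :
    ZSet E l = ⋃ (β : Ordinal) (_ : β < l), ZSet E β := by
  rw [ZSet, if_neg hl.pos.ne', dif_neg (ord_not_succ_of_limit hl)]

lemma Env_zero (H : Set G) : Env H 0 = Set.univ := by rw [Env]; simp

lemma Env_succ (H : Set G) (β : Ordinal) :
    Env H (β + 1) = {g | g ∈ Env H β ∧
      ∀ c ∈ CIter (Env H β) H (β + 1), pcomm g c ∈ CIter (Env H β) H β} := by
  rw [Env, if_neg (ord_succ_ne_zero β), dif_pos (ord_succ_ex β)]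
  rw [ord_choose_eq (ord_succ_ex β)]

lemma mem_Env_succ {H : Set G} {β : Ordinal} {g : G} :
    g ∈ Env H (β + 1) ↔ g ∈ Env H β ∧
      ∀ c ∈ CIter (Env H β) H (β + 1), pcomm g c ∈ CIter (Env H β) H β := by
  rw [Env_succ]; rfl

lemma Env_limit (H : Set G) {l : Ordinal} (hl : Order.IsSuccLimit l) :
    Env H l = ⋂ (β : Ordinal) (_ : β < l), Env H β := by
  rw [Env, if_neg hl.pos.ne', dif_neg (ord_not_succ_of_limit hl)]

lemma mem_Env_limit {H : Set G} {l : Ordinal} (hl : Order.IsSuccLimit l) {g : G} :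
    g ∈ Env H l ↔ ∀ β < l, g ∈ Env H β := by
  rw [Env_limit H hl]; simp

end Aux
open Ordinal
section Tower
universe v
variable {G : Type*} [Group G]

theorem CIter_subset_E (E Hs : Set G) (h1 : (1:G) ∈ E) : ∀ γ : Ordinal.{v}, CIter E Hs γ ⊆ E := by
  intro γ
  induction γ using Ordinal.induction with
  | h γ IH =>
    rcases Ordinal.zero_or_succ_or_isSuccLimit γ with h0 | ⟨a, ha⟩ | hlim
    · subst h0; rw [CIter_zero]; rintro x rfl; exact h1
    · rw [← Ordinal.add_one_eq_succ] at ha; subst ha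
      rw [CIter_succ]; exact fun x hx => hx.1
    · intro x hx
      rw [mem_CIter_limit hlim] at hx
      obtain ⟨β, hβ, hxβ⟩ := hx
      exact IH β hβ hxβ

theorem tower (E Hs : Set G) (h1 : (1:G) ∈ E)
    (hmul : ∀ {x y : G}, x ∈ E → y ∈ E → x * y ∈ E)
    (hinv : ∀ {x : G}, x ∈ E → x⁻¹ ∈ E) : ∀ ε : Ordinal.{v},
    ((1:G) ∈ CIter E Hs ε) ∧
    (∀ {x y : G}, x ∈ CIter E Hs ε → y ∈ CIter E Hs ε → x * y ∈ CIter E Hs ε) ∧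
    (∀ {x : G}, x ∈ CIter E Hs ε → x⁻¹ ∈ CIter E Hs ε) ∧
    (∀ δ, δ ≤ ε → CIter E Hs δ ⊆ CIter E Hs ε) ∧
    (∀ x ∈ CIter E Hs ε, ∀ h ∈ Hs, pcomm x h ∈ CIter E Hs ε) ∧
    (∀ γ' : Ordinal.{v}, ∀ x, x ∈ CIter E Hs γ' → ∀ a ∈ CIter E Hs ε, x * a * x⁻¹ ∈ CIter E Hs ε) := by
  intro ε
  induction ε using Ordinal.induction with
  | h ε IH =>
  -- subgroup properties
  have hS : ((1:G) ∈ CIter E Hs ε) ∧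
      (∀ {x y : G}, x ∈ CIter E Hs ε → y ∈ CIter E Hs ε → x * y ∈ CIter E Hs ε) ∧
      (∀ {x : G}, x ∈ CIter E Hs ε → x⁻¹ ∈ CIter E Hs ε) := by
    rcases Ordinal.zero_or_succ_or_isSuccLimit ε with h0 | ⟨β, hβ⟩ | hlim
    · subst h0; rw [CIter_zero]
      refine ⟨rfl, ?_, ?_⟩
      · rintro x y rfl rfl; simp
      · rintro x rfl; simp
    · rw [← Ordinal.add_one_eq_succ] at hβ; subst hβ
      have hβlt : β < β + 1 := ord_lt_succ β
      refine ⟨?_, ?_, ?_⟩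
      · rw [mem_CIter_succ]
        exact ⟨h1, fun γ _ a => by simp, fun h _ => by simp [(IH β hβlt).1]⟩
      · intro x y hx hy
        rw [mem_CIter_succ] at hx hy ⊢
        obtain ⟨hxE, hxn, hxc⟩ := hx
        obtain ⟨hyE, hyn, hyc⟩ := hy
        refine ⟨hmul hxE hyE, ?_, ?_⟩
        · intro γ hγ a
          have e : x * (y * a * y⁻¹) * x⁻¹ = (x * y) * a * (x * y)⁻¹ := by group
          exact (hyn γ hγ a).trans (e ▸ hxn γ hγ (y * a * y⁻¹))
        · intro h hh
          rw [pcomm_mul_left]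
          refine (IH β hβlt).2.1 ?_ (hyc h hh)
          have h2 := (hyn β hβlt (y⁻¹ * (pcomm x h) * y)).mpr
          have e : y * (y⁻¹ * (pcomm x h) * y) * y⁻¹ = pcomm x h := by group
          rw [e] at h2
          exact h2 (hxc h hh)
      · intro x hx
        rw [mem_CIter_succ] at hx ⊢
        obtain ⟨hxE, hxn, hxc⟩ := hx
        refine ⟨hinv hxE, ?_, ?_⟩
        · intro γ hγ a
          have := (hxn γ hγ (x⁻¹ * a * x)).symm
          have e1 : x * (x⁻¹ * a * x) * x⁻¹ = a := by group
          have e2 : x⁻¹ * a * x⁻¹⁻¹ = x⁻¹ * a * x := by group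
          rw [e1] at this; rw [e2]; exact this
        · intro h hh
          rw [pcomm_inv_left']
          exact (hxn β hβlt _).mp ((IH β hβlt).2.2.1 (hxc h hh))
    · have hone : (1:G) ∈ CIter E Hs ε := by
        rw [mem_CIter_limit hlim]
        exact ⟨0, hlim.pos, by rw [CIter_zero]; rfl⟩
      refine ⟨hone, ?_, ?_⟩
      · intro x y hx hy
        rw [mem_CIter_limit hlim] at hx hy ⊢
        obtain ⟨δ₁, hδ₁, hx⟩ := hx
        obtain ⟨δ₂, hδ₂, hy⟩ := hy
        have hm : max δ₁ δ₂ < ε := max_lt hδ₁ hδ₂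
        exact ⟨max δ₁ δ₂, hm,
          (IH _ hm).2.1 ((IH _ hm).2.2.2.1 δ₁ (le_max_left _ _) hx)
            ((IH _ hm).2.2.2.1 δ₂ (le_max_right _ _) hy)⟩
      · intro x hx
        rw [mem_CIter_limit hlim] at hx ⊢
        obtain ⟨δ, hδ, hx⟩ := hx
        exact ⟨δ, hδ, (IH δ hδ).2.2.1 hx⟩
  -- monotonicity
  have hA : ∀ δ, δ ≤ ε → CIter E Hs δ ⊆ CIter E Hs ε := by
    intro δ hδ
    rcases eq_or_lt_of_le hδ with rfl | hδ
    · exact subset_rfl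
    rcases Ordinal.zero_or_succ_or_isSuccLimit ε with h0 | ⟨β, hβ⟩ | hlim
    · exact absurd hδ (by subst h0; exact (by simp : ¬ δ < 0))
    · rw [← Ordinal.add_one_eq_succ] at hβ; subst hβ
      have hβlt : β < β + 1 := ord_lt_succ β
      have hδβ : δ ≤ β := ord_lt_succ_iff.mp hδ
      refine subset_trans ((IH β hβlt).2.2.2.1 δ hδβ) ?_
      intro x hx
      rw [mem_CIter_succ]
      refine ⟨CIter_subset_E E Hs h1 β hx, ?_, ?_⟩
      · intro γ hγ a
        have hγβ : γ ≤ β := ord_lt_succ_iff.mp hγ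
        have hγε : γ < β + 1 := hγ
        have hγlt : γ < β + 1 := hγ
        have hxinv : x⁻¹ ∈ CIter E Hs β := (IH β hβlt).2.2.1 hx
        constructor
        · intro ha
          exact (IH γ (lt_of_le_of_lt hγβ hβlt)).2.2.2.2.2 β x hx a ha
        · intro ha
          have := (IH γ (lt_of_le_of_lt hγβ hβlt)).2.2.2.2.2 β x⁻¹ hxinv _ ha
          have e : x⁻¹ * (x * a * x⁻¹) * x⁻¹⁻¹ = a := by group
          rwa [e] at this
      · intro h hh
        exact (IH β hβlt).2.2.2.2.1 x hx h hh
    · intro x hx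
      rw [mem_CIter_limit hlim]
      exact ⟨δ, hδ, hx⟩
  -- pcomm with H stays
  have hPC : ∀ x ∈ CIter E Hs ε, ∀ h ∈ Hs, pcomm x h ∈ CIter E Hs ε := by
    rcases Ordinal.zero_or_succ_or_isSuccLimit ε with h0 | ⟨β, hβ⟩ | hlim
    · subst h0; rw [CIter_zero]; rintro x rfl h _; simp
    · rw [← Ordinal.add_one_eq_succ] at hβ; subst hβ
      intro x hx h hh
      rw [mem_CIter_succ] at hx
      exact hA β (le_of_lt (ord_lt_succ β)) (hx.2.2 h hh)
    · intro x hx h hh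
      rw [mem_CIter_limit hlim] at hx ⊢
      obtain ⟨δ, hδ, hx⟩ := hx
      exact ⟨δ, hδ, (IH δ hδ).2.2.2.2.1 x hx h hh⟩
  refine ⟨hS.1, hS.2.1, hS.2.2, hA, hPC, ?_⟩
  -- normalization by elements of the tower
  intro γ'
  induction γ' using Ordinal.induction with
  | h γ' IHin =>
  intro x hx a ha
  rcases Ordinal.zero_or_succ_or_isSuccLimit γ' with h0 | ⟨γ'', hγ''⟩ | hlim'
  · subst h0; rw [CIter_zero] at hx; rw [hx]; simpa using ha
  · rw [← Ordinal.add_one_eq_succ] at hγ''; subst hγ''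
    rcases Ordinal.zero_or_succ_or_isSuccLimit ε with h0 | ⟨ε', hε'⟩ | hlim
    · subst h0; rw [CIter_zero] at ha ⊢; rw [ha]; simp
    · rw [← Ordinal.add_one_eq_succ] at hε'; subst hε'
      rw [mem_CIter_succ] at hx
      obtain ⟨hxE, hxn, hxc⟩ := hx
      by_cases hcase : ε' + 1 < γ'' + 1
      · exact (hxn _ hcase a).mp ha
      · -- γ'' + 1 ≤ ε' + 1
        have hγ'le : γ'' + 1 ≤ ε' + 1 := le_of_not_gt hcase
        rcases eq_or_lt_of_le hγ'le with heq | hlt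
        · -- same level : subgroup property
          have hx' : x ∈ CIter E Hs (ε' + 1) := by rw [← heq]; rw [mem_CIter_succ]; exact ⟨hxE, hxn, hxc⟩
          exact hS.2.1 (hS.2.1 hx' ha) (hS.2.2 hx')
        · -- γ'' + 1 ≤ ε'
          have hγ'ε' : γ'' + 1 ≤ ε' := ord_lt_succ_iff.mp hlt
          have hγ''ε' : γ'' < ε' := lt_of_lt_of_le (ord_lt_succ γ'') hγ'ε'
          have hε'lt : ε' < ε' + 1 := ord_lt_succ ε'
          have hγ'lt : γ'' + 1 < ε' + 1 := lt_of_le_of_lt hγ'ε' hε'lt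
          have hγ''lt : γ'' < ε' + 1 := lt_trans hγ''ε' hε'lt
          have hxmem : x ∈ CIter E Hs (γ'' + 1) := by
            rw [mem_CIter_succ]; exact ⟨hxE, hxn, hxc⟩
          have hxinv : x⁻¹ ∈ CIter E Hs (γ'' + 1) := (IH _ hγ'lt).2.2.1 hxmem
          -- an iff-version of normalization at any level μ ≤ ε'
          have xiff : ∀ μ, μ ≤ ε' → ∀ b : G, b ∈ CIter E Hs μ ↔ x * b * x⁻¹ ∈ CIter E Hs μ := by
            intro μ hμ b
            by_cases hc : μ < γ'' + 1
            · exact hxn μ hc b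
            · have hμlt : μ < ε' + 1 := ord_lt_succ_iff.mpr hμ
              constructor
              · intro hb; exact (IH μ hμlt).2.2.2.2.2 _ x hxmem b hb
              · intro hb
                have := (IH μ hμlt).2.2.2.2.2 _ x⁻¹ hxinv _ hb
                have e : x⁻¹ * (x * b * x⁻¹) * x⁻¹⁻¹ = b := by group
                rwa [e] at this
          rw [mem_CIter_succ] at ha ⊢
          obtain ⟨haE, han, hac⟩ := ha
          refine ⟨hmul (hmul hxE haE) (hinv hxE), ?_, ?_⟩
          · intro μ hμ b
            have hμε' : μ ≤ ε' := ord_lt_succ_iff.mp hμ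
            have c1 : b ∈ CIter E Hs μ ↔ x⁻¹ * b * x ∈ CIter E Hs μ := by
              have := (xiff μ hμε' (x⁻¹ * b * x)).symm
              have e : x * (x⁻¹ * b * x) * x⁻¹ = b := by group
              rwa [e] at this
            have c2 := han μ hμ (x⁻¹ * b * x)
            have c3 := xiff μ hμε' (a * (x⁻¹ * b * x) * a⁻¹)
            have e : x * (a * (x⁻¹ * b * x) * a⁻¹) * x⁻¹
                = (x * a * x⁻¹) * b * (x * a * x⁻¹)⁻¹ := by group
            rw [e] at c3
            exact (c1.trans c2).trans c3
          · intro h hh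
            rw [pcomm_conj]
            have hk : x⁻¹ * h * x = h * pcomm h x := conj_eq_mul_pcomm h x
            set k := pcomm h x with hkdef
            have hkmem : k ∈ CIter E Hs γ'' := by
              have := hxc h hh
              have : (pcomm x h)⁻¹ ∈ CIter E Hs γ'' := (IH γ'' hγ''lt).2.2.1 this
              rwa [pcomm_inv] at this
            have hkinv : k⁻¹ ∈ CIter E Hs γ'' := (IH γ'' hγ''lt).2.2.1 hkmem
            rw [hk, pcomm_mul_right]
            have t1 : pcomm a k ∈ CIter E Hs ε' := by
              have e : pcomm a k = (a⁻¹ * k⁻¹ * a) * k := by unfold pcomm; group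
              have hγ''ε : γ'' < ε' + 1 := hγ''lt
              have m1 : a⁻¹ * k⁻¹ * a ∈ CIter E Hs γ'' := by
                have h3 := (han γ'' hγ''ε (a⁻¹ * k⁻¹ * a)).mpr
                have e2 : a * (a⁻¹ * k⁻¹ * a) * a⁻¹ = k⁻¹ := by group
                rw [e2] at h3
                exact h3 hkinv
              have : pcomm a k ∈ CIter E Hs γ'' := by
                rw [e]; exact (IH γ'' hγ''lt).2.1 m1 hkmem
              exact (IH ε' hε'lt).2.2.2.1 γ'' (le_of_lt hγ''ε') this
            have t2 : k⁻¹ * (pcomm a h) * k ∈ CIter E Hs ε' := by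
              have := (IH ε' hε'lt).2.2.2.2.2 γ'' k⁻¹ hkinv _ (hac h hh)
              have e : k⁻¹ * (pcomm a h) * k⁻¹⁻¹ = k⁻¹ * (pcomm a h) * k := by group
              rwa [e] at this
            have t3 : pcomm a k * (k⁻¹ * (pcomm a h) * k) ∈ CIter E Hs ε' :=
              (IH ε' hε'lt).2.1 t1 t2
            exact (IH ε' hε'lt).2.2.2.2.2 _ x hxmem _ t3
    · rw [mem_CIter_limit hlim] at ha ⊢
      obtain ⟨δ, hδ, ha⟩ := ha
      have hxmem : x ∈ CIter E Hs (γ'' + 1) := hx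
      exact ⟨δ, hδ, (IH δ hδ).2.2.2.2.2 _ x hxmem a ha⟩
  · rw [mem_CIter_limit hlim'] at hx
    obtain ⟨γ₂, hγ₂, hx⟩ := hx
    exact IHin γ₂ hγ₂ x hx a ha
end Tower
section TowerCor
universe v
variable {G : Type*} [Group G] {E Hs : Set G}
variable (h1 : (1:G) ∈ E) (hmul : ∀ {x y : G}, x ∈ E → y ∈ E → x * y ∈ E)
  (hinv : ∀ {x : G}, x ∈ E → x⁻¹ ∈ E)

include h1 hmul hinv

lemma CIter_one (ε : Ordinal.{v}) : (1:G) ∈ CIter E Hs ε :=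
  (tower E Hs h1 @hmul @hinv ε).1

lemma CIter_mul {ε : Ordinal.{v}} {x y : G} (hx : x ∈ CIter E Hs ε) (hy : y ∈ CIter E Hs ε) :
    x * y ∈ CIter E Hs ε := (tower E Hs h1 @hmul @hinv ε).2.1 hx hy

lemma CIter_inv {ε : Ordinal.{v}} {x : G} (hx : x ∈ CIter E Hs ε) :
    x⁻¹ ∈ CIter E Hs ε := (tower E Hs h1 @hmul @hinv ε).2.2.1 hx

lemma CIter_mono {δ ε : Ordinal.{v}} (h : δ ≤ ε) : CIter E Hs δ ⊆ CIter E Hs ε :=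
  (tower E Hs h1 @hmul @hinv ε).2.2.2.1 δ h

lemma CIter_pcommH {ε : Ordinal.{v}} {x h : G} (hx : x ∈ CIter E Hs ε) (hh : h ∈ Hs) :
    pcomm x h ∈ CIter E Hs ε := (tower E Hs h1 @hmul @hinv ε).2.2.2.2.1 x hx h hh

lemma CIter_conj {ε γ : Ordinal.{v}} {x a : G} (hx : x ∈ CIter E Hs γ) (ha : a ∈ CIter E Hs ε) :
    x * a * x⁻¹ ∈ CIter E Hs ε := (tower E Hs h1 @hmul @hinv ε).2.2.2.2.2 γ x hx a ha

lemma CIter_conj_iff {ε γ : Ordinal.{v}} {x : G} (hx : x ∈ CIter E Hs γ) (a : G) :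
    a ∈ CIter E Hs ε ↔ x * a * x⁻¹ ∈ CIter E Hs ε := by
  constructor
  · exact fun ha => CIter_conj h1 @hmul @hinv hx ha
  · intro ha
    have := CIter_conj h1 @hmul @hinv (CIter_inv h1 @hmul @hinv hx) ha
    have e : x⁻¹ * (x * a * x⁻¹) * x⁻¹⁻¹ = a := by group
    rwa [e] at this

variable (hH1 : Hs ⊆ E) (hHmul : ∀ {a b : G}, a ∈ Hs → b ∈ Hs → a * b ∈ Hs)
  (hHinv : ∀ {a : G}, a ∈ Hs → a⁻¹ ∈ Hs)

include hH1 hHmul hHinv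

/-- Elements of `H` normalize every iterated centralizer. -/
lemma CIter_H_conj : ∀ γ : Ordinal.{v}, ∀ h ∈ Hs, ∀ a ∈ CIter E Hs γ,
    h * a * h⁻¹ ∈ CIter E Hs γ := by
  intro γ
  induction γ using Ordinal.induction with
  | h γ IH =>
  intro h hh a ha
  rcases Ordinal.zero_or_succ_or_isSuccLimit γ with h0 | ⟨β, hβ⟩ | hlim
  · subst h0; rw [CIter_zero] at ha ⊢; rw [ha]; simp
  · rw [← Ordinal.add_one_eq_succ] at hβ; subst hβ
    have hβlt : β < β + 1 := ord_lt_succ β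
    have niff : ∀ μ, μ < β + 1 → ∀ b : G, b ∈ CIter E Hs μ ↔ h * b * h⁻¹ ∈ CIter E Hs μ := by
      intro μ hμ b
      constructor
      · exact fun hb => IH μ hμ h hh b hb
      · intro hb
        have := IH μ hμ h⁻¹ (hHinv hh) _ hb
        have e : h⁻¹ * (h * b * h⁻¹) * h⁻¹⁻¹ = b := by group
        rwa [e] at this
    rw [mem_CIter_succ] at ha ⊢
    obtain ⟨haE, han, hac⟩ := ha
    refine ⟨hmul (hmul (hH1 hh) haE) (hinv (hH1 hh)), ?_, ?_⟩
    · intro μ hμ b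
      have c1 : b ∈ CIter E Hs μ ↔ h⁻¹ * b * h ∈ CIter E Hs μ := by
        have := (niff μ hμ (h⁻¹ * b * h)).symm
        have e : h * (h⁻¹ * b * h) * h⁻¹ = b := by group
        rwa [e] at this
      have c2 := han μ hμ (h⁻¹ * b * h)
      have c3 := niff μ hμ (a * (h⁻¹ * b * h) * a⁻¹)
      have e : h * (a * (h⁻¹ * b * h) * a⁻¹) * h⁻¹
          = (h * a * h⁻¹) * b * (h * a * h⁻¹)⁻¹ := by group
      rw [e] at c3
      exact (c1.trans c2).trans c3
    · intro h' hh'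
      rw [pcomm_conj]
      have hmem : h⁻¹ * h' * h ∈ Hs := hHmul (hHmul (hHinv hh) hh') hh
      exact IH β hβlt h hh _ (hac _ hmem)
  · rw [mem_CIter_limit hlim] at ha ⊢
    obtain ⟨δ, hδ, ha⟩ := ha
    exact ⟨δ, hδ, IH δ hδ h hh a ha⟩

/-- The transfinite centre levels of `H` are contained in the iterated centralizers. -/
lemma ZSet_subset_CIter : ∀ δ : Ordinal.{v}, ZSet Hs δ ⊆ CIter E Hs δ := by
  intro δ
  induction δ using Ordinal.induction with
  | h δ IH =>
  rcases Ordinal.zero_or_succ_or_isSuccLimit δ with h0 | ⟨β, hβ⟩ | hlim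
  · subst h0; rw [ZSet_zero, CIter_zero]
  · rw [← Ordinal.add_one_eq_succ] at hβ; subst hβ
    have hβlt : β < β + 1 := ord_lt_succ β
    intro x hx
    rw [ZSet_succ] at hx
    obtain ⟨hxH, hxz⟩ := hx
    rw [mem_CIter_succ]
    refine ⟨hH1 hxH, ?_, ?_⟩
    · intro μ hμ b
      constructor
      · exact fun hb => CIter_H_conj h1 @hmul @hinv hH1 @hHmul @hHinv μ x hxH b hb
      · intro hb
        have := CIter_H_conj h1 @hmul @hinv hH1 @hHmul @hHinv μ x⁻¹ (hHinv hxH) _ hb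
        have e : x⁻¹ * (x * b * x⁻¹) * x⁻¹⁻¹ = b := by group
        rwa [e] at this
    · intro h hh
      exact IH β hβlt (hxz h hh)
  · intro x hx
    rw [ZSet_limit Hs hlim] at hx
    simp only [Set.mem_iUnion] at hx
    obtain ⟨β, hβ, hx⟩ := hx
    rw [mem_CIter_limit hlim]
    exact ⟨β, hβ, IH β hβ hx⟩

end TowerCor
section EnvMachine
universe v
variable {G : Type*} [Group G]

lemma ord_succ_le {a b : Ordinal.{v}} (h : a < b) : a + 1 ≤ b := by
  rw [Ordinal.add_one_eq_succ]; exact Order.succ_le_of_lt h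

lemma Env_antitone (Hs : Set G) : ∀ β γ : Ordinal.{v}, γ ≤ β → Env Hs β ⊆ Env Hs γ := by
  intro β
  induction β using Ordinal.induction with
  | h β IH =>
  intro γ hγ
  rcases eq_or_lt_of_le hγ with rfl | hlt
  · exact subset_rfl
  rcases Ordinal.zero_or_succ_or_isSuccLimit β with h0 | ⟨μ, hμ⟩ | hlim
  · exact absurd hlt (by subst h0; exact (by simp : ¬ γ < 0))
  · rw [← Ordinal.add_one_eq_succ] at hμ; subst hμ
    have hsub : Env Hs (μ+1) ⊆ Env Hs μ := fun g hg => (mem_Env_succ.mp hg).1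
    exact subset_trans hsub (IH μ (ord_lt_succ μ) γ (ord_lt_succ_iff.mp hlt))
  · intro g hg
    rw [mem_Env_limit hlim] at hg
    exact hg γ hlt

variable {Hs : Set G} {β : Ordinal.{v}}
variable (hone : (1:G) ∈ Env Hs β)
  (hm : ∀ {x y : G}, x ∈ Env Hs β → y ∈ Env Hs β → x * y ∈ Env Hs β)
  (hi : ∀ {x : G}, x ∈ Env Hs β → x⁻¹ ∈ Env Hs β)
  (hsub : Hs ⊆ Env Hs β)
  (hnd : ∀ δ : Ordinal.{v}, δ < β → ∀ g ∈ Env Hs β, ∀ γ ≤ δ + 1,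
      ∀ a ∈ CIter (Env Hs δ) Hs γ, g * a * g⁻¹ ∈ CIter (Env Hs δ) Hs γ)

include hone hm hi hsub hnd

/-- Compatibility of relative iterated centralizers along the envelope chain. -/
lemma CPAT_of {δ : Ordinal.{v}} (hδ : δ < β) :
    ∀ γ ≤ δ + 1, CIter (Env Hs β) Hs γ = CIter (Env Hs δ) Hs γ ∩ Env Hs β := by
  intro γ
  induction γ using Ordinal.induction with
  | h γ IH =>
  intro hγ
  rcases Ordinal.zero_or_succ_or_isSuccLimit γ with h0 | ⟨μ, hμ⟩ | hlim
  · subst h0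
    rw [CIter_zero, CIter_zero]
    ext x
    simp only [Set.mem_inter_iff, Set.mem_singleton_iff]
    exact ⟨fun h => ⟨h, h ▸ hone⟩, fun h => h.1⟩
  · rw [← Ordinal.add_one_eq_succ] at hμ; subst hμ
    have hμδ : μ ≤ δ := ord_lt_succ_iff.mp (lt_of_lt_of_le (ord_lt_succ μ) hγ)
    have hμγ : μ < μ + 1 := ord_lt_succ μ
    have hμle : μ ≤ δ + 1 := le_trans hμδ (le_of_lt (ord_lt_succ δ))
    have IHμ := IH μ hμγ hμle
    ext x
    constructor
    · intro hx
      rw [mem_CIter_succ] at hx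
      obtain ⟨hxE, hxn, hxc⟩ := hx
      refine ⟨?_, hxE⟩
      rw [mem_CIter_succ]
      refine ⟨Env_antitone Hs β δ (le_of_lt hδ) hxE, ?_, ?_⟩
      · intro ν hν b
        have hνle : ν ≤ δ + 1 := le_trans (ord_lt_succ_iff.mp hν) hμle
        constructor
        · exact fun hb => hnd δ hδ x hxE ν hνle b hb
        · intro hb
          have := hnd δ hδ x⁻¹ (hi hxE) ν hνle _ hb
          have e : x⁻¹ * (x * b * x⁻¹) * x⁻¹⁻¹ = b := by group
          rwa [e] at this
      · intro h hh
        have := hxc h hh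
        rw [IHμ] at this
        exact this.1
    · rintro ⟨hx, hxβ⟩
      rw [mem_CIter_succ] at hx
      obtain ⟨hxE, hxn, hxc⟩ := hx
      rw [mem_CIter_succ]
      refine ⟨hxβ, ?_, ?_⟩
      · intro ν hν b
        have hνle : ν ≤ δ + 1 := le_trans (ord_lt_succ_iff.mp hν) hμle
        have hIHν := IH ν hν hνle
        rw [hIHν]
        simp only [Set.mem_inter_iff]
        constructor
        · rintro ⟨hb1, hb2⟩
          refine ⟨(hxn ν hν b).mp hb1, hm (hm hxβ hb2) (hi hxβ)⟩
        · rintro ⟨hb1, hb2⟩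
          refine ⟨(hxn ν hν b).mpr hb1, ?_⟩
          have := hm (hm (hi hxβ) hb2) hxβ
          have e : x⁻¹ * (x * b * x⁻¹) * x = b := by group
          rwa [e] at this
      · intro h hh
        rw [IHμ]
        refine ⟨hxc h hh, ?_⟩
        show x⁻¹ * h⁻¹ * x * h ∈ Env Hs β
        exact hm (hm (hm (hi hxβ) (hi (hsub hh))) hxβ) (hsub hh)
  · have e1 : CIter (Env Hs β) Hs γ = ⋃ (μ : Ordinal) (_ : μ < γ), CIter (Env Hs β) Hs μ :=
      CIter_limit _ _ hlim
    have e2 : CIter (Env Hs δ) Hs γ = ⋃ (μ : Ordinal) (_ : μ < γ), CIter (Env Hs δ) Hs μ :=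
      CIter_limit _ _ hlim
    rw [e1, e2, Set.iUnion₂_inter]
    apply Set.iUnion₂_congr
    intro μ hμ
    exact IH μ hμ (le_trans (le_of_lt hμ) hγ)

/-- Envelope elements normalize all levels of their own relative tower. -/
lemma NRM_of : ∀ g ∈ Env Hs β, ∀ γ ≤ β,
    ∀ a ∈ CIter (Env Hs β) Hs γ, g * a * g⁻¹ ∈ CIter (Env Hs β) Hs γ := by
  have hEβ1 : (1:G) ∈ Env Hs β := hone
  intro g hg γ
  induction γ using Ordinal.induction with
  | h γ IH =>
  intro hγ a ha
  rcases Ordinal.zero_or_succ_or_isSuccLimit γ with h0 | ⟨δ, hδ⟩ | hlim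
  · subst h0; rw [CIter_zero] at ha ⊢; rw [ha]; simp
  · rw [← Ordinal.add_one_eq_succ] at hδ; subst hδ
    have hδβ : δ < β := lt_of_lt_of_le (ord_lt_succ δ) hγ
    have hcp1 := CPAT_of hone @hm @hi hsub hnd hδβ (δ+1) le_rfl
    have hcp0 := CPAT_of hone @hm @hi hsub hnd hδβ δ (le_of_lt (ord_lt_succ δ))
    have key : ∀ g' ∈ Env Hs β, g'⁻¹ * a * g' ∈ CIter (Env Hs β) Hs (δ + 1) := by
      intro g' hg'
      have hg'δ : g' ∈ Env Hs (δ + 1) := Env_antitone Hs β (δ+1) hγ hg'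
      have haδ : a ∈ CIter (Env Hs δ) Hs (δ + 1) := by
        rw [hcp1] at ha; exact ha.1
      have hpc : pcomm g' a ∈ CIter (Env Hs δ) Hs δ :=
        (mem_Env_succ.mp hg'δ).2 a haδ
      have hpcβ : pcomm g' a ∈ Env Hs β := by
        have haβ : a ∈ Env Hs β := by rw [hcp1] at ha; exact ha.2
        show g'⁻¹ * a⁻¹ * g' * a ∈ Env Hs β
        exact hm (hm (hm (hi hg') (hi haβ)) hg') haβ
      have hpcmem : pcomm g' a ∈ CIter (Env Hs β) Hs δ := by
        rw [hcp0]; exact ⟨hpc, hpcβ⟩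
      have hinvmem : (pcomm g' a)⁻¹ ∈ CIter (Env Hs β) Hs (δ + 1) :=
        CIter_mono hEβ1 @hm @hi (le_of_lt (ord_lt_succ δ)) (CIter_inv hEβ1 @hm @hi hpcmem)
      have e : g'⁻¹ * a * g' = a * (pcomm g' a)⁻¹ := by unfold pcomm; group
      rw [e]
      exact CIter_mul hEβ1 @hm @hi ha hinvmem
    have := key g⁻¹ (hi hg)
    have e : g⁻¹⁻¹ * a * g⁻¹ = g * a * g⁻¹ := by group
    rwa [e] at this
  · rw [mem_CIter_limit hlim] at ha ⊢
    obtain ⟨δ, hδ, ha⟩ := ha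
    exact ⟨δ, hδ, IH δ hδ (le_trans (le_of_lt hδ) hγ) a ha⟩

end EnvMachine
section EnvMain
universe v
variable {G : Type*} [Group G]
variable {Hs : Set G} (hh1 : (1:G) ∈ Hs)
  (hhmul : ∀ {a b : G}, a ∈ Hs → b ∈ Hs → a * b ∈ Hs)
  (hhinv : ∀ {a : G}, a ∈ Hs → a⁻¹ ∈ Hs)

include hh1 hhmul hhinv

theorem env_main : ∀ β : Ordinal.{v},
    (((1:G) ∈ Env Hs β) ∧
     (∀ {x y : G}, x ∈ Env Hs β → y ∈ Env Hs β → x * y ∈ Env Hs β) ∧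
     (∀ {x : G}, x ∈ Env Hs β → x⁻¹ ∈ Env Hs β) ∧
     Hs ⊆ Env Hs β) ∧
    (∀ δ : Ordinal.{v}, δ < β → ∀ g ∈ Env Hs β, ∀ γ ≤ δ + 1,
        ∀ a ∈ CIter (Env Hs δ) Hs γ, g * a * g⁻¹ ∈ CIter (Env Hs δ) Hs γ) ∧
    (∀ δ : Ordinal.{v}, δ < β → ∀ γ ≤ δ + 1,
        CIter (Env Hs β) Hs γ = CIter (Env Hs δ) Hs γ ∩ Env Hs β) ∧
    (∀ g ∈ Env Hs β, ∀ γ ≤ β, ∀ a ∈ CIter (Env Hs β) Hs γ,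
        g * a * g⁻¹ ∈ CIter (Env Hs β) Hs γ) := by
  intro β
  induction β using Ordinal.induction with
  | h β IH =>
  rcases Ordinal.zero_or_succ_or_isSuccLimit β with h0 | ⟨μ, hμ⟩ | hlim
  · subst h0
    have hz := Env_zero (G := G) Hs
    refine ⟨⟨?_, ?_, ?_, ?_⟩, ?_, ?_, ?_⟩
    · rw [hz]; trivial
    · intro x y _ _; rw [hz]; trivial
    · intro x _; rw [hz]; trivial
    · rw [hz]; exact Set.subset_univ _
    · intro δ hδ; exact absurd hδ ((by simp : ¬ δ < 0))
    · intro δ hδ; exact absurd hδ ((by simp : ¬ δ < 0))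
    · intro g hg γ hγ a ha
      have h0 : γ = 0 := nonpos_iff_eq_zero.mp hγ
      subst h0
      rw [CIter_zero] at ha ⊢
      rw [ha]; simp
  · rw [← Ordinal.add_one_eq_succ] at hμ; subst hμ
    obtain ⟨⟨e1, emul, einv, esub⟩, nd, cp, nr⟩ := IH μ (ord_lt_succ μ)
    have hHsub : Hs ⊆ Env Hs (μ + 1) := by
      intro h hh
      rw [mem_Env_succ]
      refine ⟨esub hh, ?_⟩
      intro c hc
      have := CIter_inv e1 @emul @einv ((mem_CIter_succ.mp hc).2.2 h hh)
      rwa [pcomm_inv] at this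
    have keyconj : ∀ g ∈ Env Hs (μ + 1), ∀ c ∈ CIter (Env Hs μ) Hs (μ + 1),
        g * c * g⁻¹ ∈ CIter (Env Hs μ) Hs (μ + 1) := by
      intro g hg c hc
      obtain ⟨hgE, hgc⟩ := mem_Env_succ.mp hg
      have hgiE : g⁻¹ ∈ Env Hs μ := einv hgE
      have giff : ∀ ε, ε ≤ μ → ∀ b : G,
          b ∈ CIter (Env Hs μ) Hs ε ↔ g * b * g⁻¹ ∈ CIter (Env Hs μ) Hs ε := by
        intro ε hε b
        constructor
        · exact fun hb => nr g hgE ε hε b hb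
        · intro hb
          have h2 := nr g⁻¹ hgiE ε hε _ hb
          have e : g⁻¹ * (g * b * g⁻¹) * g⁻¹⁻¹ = b := by group
          rwa [e] at h2
      obtain ⟨hcE, hcn, hcc⟩ := mem_CIter_succ.mp hc
      rw [mem_CIter_succ]
      refine ⟨emul (emul hgE hcE) hgiE, ?_, ?_⟩
      · intro ε hε b
        have hεμ : ε ≤ μ := ord_lt_succ_iff.mp hε
        have c1 : b ∈ CIter (Env Hs μ) Hs ε ↔ g⁻¹ * b * g ∈ CIter (Env Hs μ) Hs ε := by
          have h2 := (giff ε hεμ (g⁻¹ * b * g)).symm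
          have e : g * (g⁻¹ * b * g) * g⁻¹ = b := by group
          rwa [e] at h2
        have c2 := hcn ε hε (g⁻¹ * b * g)
        have c3 := giff ε hεμ (c * (g⁻¹ * b * g) * c⁻¹)
        have e : g * (c * (g⁻¹ * b * g) * c⁻¹) * g⁻¹
            = (g * c * g⁻¹) * b * (g * c * g⁻¹)⁻¹ := by group
        rw [e] at c3
        exact (c1.trans c2).trans c3
      · intro h hh
        rw [pcomm_conj]
        have hkE : pcomm h g ∈ Env Hs μ := by
          show h⁻¹ * g⁻¹ * h * g ∈ Env Hs μ
          exact emul (emul (emul (einv (esub hh)) (einv hgE)) (esub hh)) hgE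
        have hck : pcomm c (pcomm h g) ∈ CIter (Env Hs μ) Hs μ := by
          have ek : pcomm h g = (h⁻¹ * g⁻¹ * h) * g := by unfold pcomm; group
          rw [ek, pcomm_mul_right]
          have t1 : pcomm c g ∈ CIter (Env Hs μ) Hs μ := by
            have h2 := CIter_inv e1 @emul @einv (hgc c hc)
            rwa [pcomm_inv] at h2
          have t2 : pcomm c (h⁻¹ * g⁻¹ * h) ∈ CIter (Env Hs μ) Hs μ := by
            rw [pcomm_right_conj]
            have hc' : h * c * h⁻¹ ∈ CIter (Env Hs μ) Hs (μ + 1) :=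
              CIter_H_conj e1 @emul @einv esub @hhmul @hhinv (μ+1) h hh c hc
            have t3 : pcomm (h * c * h⁻¹) g⁻¹ ∈ CIter (Env Hs μ) Hs μ := by
              rw [pcomm_right_inv]
              exact nr g hgE μ le_rfl _ (hgc _ hc')
            have h2 := CIter_H_conj e1 @emul @einv esub @hhmul @hhinv μ h⁻¹ (hhinv hh) _ t3
            have e : h⁻¹ * (pcomm (h * c * h⁻¹) g⁻¹) * h⁻¹⁻¹
                = h⁻¹ * (pcomm (h * c * h⁻¹) g⁻¹) * h := by group
            rwa [e] at h2
          refine CIter_mul e1 @emul @einv t1 ?_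
          have h2 := nr g⁻¹ hgiE μ le_rfl _ t2
          have e : g⁻¹ * (pcomm c (h⁻¹ * g⁻¹ * h)) * g⁻¹⁻¹
              = g⁻¹ * (pcomm c (h⁻¹ * g⁻¹ * h)) * g := by group
          rwa [e] at h2
        have ehk : g⁻¹ * h * g = h * pcomm h g := conj_eq_mul_pcomm h g
        rw [ehk, pcomm_mul_right]
        have u1 : pcomm c h ∈ CIter (Env Hs μ) Hs μ := hcc h hh
        have u2 : (pcomm h g)⁻¹ * (pcomm c h) * (pcomm h g) ∈ CIter (Env Hs μ) Hs μ := by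
          have h2 := nr (pcomm h g)⁻¹ (einv hkE) μ le_rfl _ u1
          have e : (pcomm h g)⁻¹ * (pcomm c h) * (pcomm h g)⁻¹⁻¹
              = (pcomm h g)⁻¹ * (pcomm c h) * (pcomm h g) := by group
          rwa [e] at h2
        have u3 := CIter_mul e1 @emul @einv hck u2
        exact nr g hgE μ le_rfl _ u3
    have hone' : (1:G) ∈ Env Hs (μ+1) := by
      rw [mem_Env_succ]
      refine ⟨e1, ?_⟩
      intro c hc
      rw [pcomm_one_left]
      exact CIter_one e1 @emul @einv μ
    have hmul' : ∀ {x y : G}, x ∈ Env Hs (μ+1) → y ∈ Env Hs (μ+1) → x * y ∈ Env Hs (μ+1) := by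
      intro x y hx hy
      obtain ⟨hxE, hxc⟩ := mem_Env_succ.mp hx
      obtain ⟨hyE, hyc⟩ := mem_Env_succ.mp hy
      rw [mem_Env_succ]
      refine ⟨emul hxE hyE, ?_⟩
      intro c hc
      rw [pcomm_mul_left]
      refine CIter_mul e1 @emul @einv ?_ (hyc c hc)
      have h2 := nr y⁻¹ (einv hyE) μ le_rfl _ (hxc c hc)
      have e : y⁻¹ * (pcomm x c) * y⁻¹⁻¹ = y⁻¹ * (pcomm x c) * y := by group
      rwa [e] at h2
    have hinv' : ∀ {x : G}, x ∈ Env Hs (μ+1) → x⁻¹ ∈ Env Hs (μ+1) := by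
      intro x hx
      have hxc := (mem_Env_succ.mp hx).2
      rw [mem_Env_succ]
      refine ⟨einv (mem_Env_succ.mp hx).1, ?_⟩
      intro c hc
      rw [pcomm_inv_left]
      exact CIter_inv e1 @emul @einv (hxc _ (keyconj x hx c hc))
    have hnd' : ∀ δ : Ordinal.{v}, δ < μ + 1 → ∀ g ∈ Env Hs (μ+1), ∀ γ ≤ δ + 1,
        ∀ a ∈ CIter (Env Hs δ) Hs γ, g * a * g⁻¹ ∈ CIter (Env Hs δ) Hs γ := by
      intro δ hδ g hg γ hγ a ha
      have hgE : g ∈ Env Hs μ := (mem_Env_succ.mp hg).1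
      rcases eq_or_lt_of_le (ord_lt_succ_iff.mp hδ) with rfl | hδμ
      · rcases eq_or_lt_of_le hγ with rfl | hγlt
        · exact keyconj g hg a ha
        · exact nr g hgE γ (ord_lt_succ_iff.mp hγlt) a ha
      · exact nd δ hδμ g hgE γ hγ a ha
    have hcp' : ∀ δ : Ordinal.{v}, δ < μ + 1 → ∀ γ ≤ δ + 1,
        CIter (Env Hs (μ+1)) Hs γ = CIter (Env Hs δ) Hs γ ∩ Env Hs (μ+1) :=
      fun δ hδ => CPAT_of hone' @hmul' @hinv' hHsub hnd' hδ
    have hnr' := NRM_of hone' @hmul' @hinv' hHsub hnd'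
    exact ⟨⟨hone', @hmul', @hinv', hHsub⟩, hnd', hcp', hnr'⟩
  · have hone' : (1:G) ∈ Env Hs β := by
      rw [mem_Env_limit hlim]; exact fun μ hμ => (IH μ hμ).1.1
    have hmul' : ∀ {x y : G}, x ∈ Env Hs β → y ∈ Env Hs β → x * y ∈ Env Hs β := by
      intro x y hx hy
      rw [mem_Env_limit hlim] at hx hy ⊢
      exact fun μ hμ => (IH μ hμ).1.2.1 (hx μ hμ) (hy μ hμ)
    have hinv' : ∀ {x : G}, x ∈ Env Hs β → x⁻¹ ∈ Env Hs β := by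
      intro x hx
      rw [mem_Env_limit hlim] at hx ⊢
      exact fun μ hμ => (IH μ hμ).1.2.2.1 (hx μ hμ)
    have hsub' : Hs ⊆ Env Hs β := by
      intro h hh
      rw [mem_Env_limit hlim]
      exact fun μ hμ => (IH μ hμ).1.2.2.2 hh
    have hnd' : ∀ δ : Ordinal.{v}, δ < β → ∀ g ∈ Env Hs β, ∀ γ ≤ δ + 1,
        ∀ a ∈ CIter (Env Hs δ) Hs γ, g * a * g⁻¹ ∈ CIter (Env Hs δ) Hs γ := by
      intro δ hδ g hg γ hγ a ha
      have hδ1 : δ + 1 < β := by rw [Ordinal.add_one_eq_succ]; exact hlim.succ_lt hδ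
      have hgδ : g ∈ Env Hs (δ + 1) := by
        rw [mem_Env_limit hlim] at hg; exact hg (δ+1) hδ1
      exact (IH (δ+1) hδ1).2.1 δ (ord_lt_succ δ) g hgδ γ hγ a ha
    have hcp' : ∀ δ : Ordinal.{v}, δ < β → ∀ γ ≤ δ + 1,
        CIter (Env Hs β) Hs γ = CIter (Env Hs δ) Hs γ ∩ Env Hs β :=
      fun δ hδ => CPAT_of hone' @hmul' @hinv' hsub' hnd' hδ
    have hnr' := NRM_of hone' @hmul' @hinv' hsub' hnd'
    exact ⟨⟨hone', @hmul', @hinv', hsub'⟩, hnd', hcp', hnr'⟩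

end EnvMain
section Endhelpers
universe v
variable {G : Type*} [Group G]

/-- If `x` centralizes `S` and `z` normalizes `S`, then `z⁻¹xz x⁻¹` centralizes `S`. -/
lemma gen_commute {S : Set G} {z x : G} (hx : x ∈ Set.centralizer S)
    (hz : ∀ s ∈ S, z * s * z⁻¹ ∈ S) :
    z⁻¹ * x * z * x⁻¹ ∈ Set.centralizer S := by
  intro u hu
  have hvS : z * u * z⁻¹ ∈ S := hz u hu
  have hxv : (z * u * z⁻¹) * x = x * (z * u * z⁻¹) := hx _ hvS
  have cux : Commute u x := hx u hu
  have hxu : u * x⁻¹ = x⁻¹ * u := cux.inv_right.eq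
  calc u * (z⁻¹ * x * z * x⁻¹)
      = z⁻¹ * ((z * u * z⁻¹) * x) * (z * x⁻¹) := by group
    _ = z⁻¹ * (x * (z * u * z⁻¹)) * (z * x⁻¹) := by rw [hxv]
    _ = (z⁻¹ * x * z) * (u * x⁻¹) := by group
    _ = (z⁻¹ * x * z) * (x⁻¹ * u) := by rw [hxu]
    _ = (z⁻¹ * x * z * x⁻¹) * u := by group

/-- key commutation step: if conjugation by `z` multiplies `x`,`y` by suitable
commuting "cocycles", then `z` commutes with the commutator of `x` and `y`. -/
lemma comm_step {x y z c₁ c₂ : G}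
    (e₁ : z⁻¹ * x * z = c₁ * x) (e₂ : z⁻¹ * y * z = c₂ * y)
    (h1 : Commute x c₁) (h2 : Commute x c₂) (h3 : Commute y c₁) (h4 : Commute y c₂)
    (h5 : Commute c₁ c₂) :
    Commute z (x * y * x⁻¹ * y⁻¹) := by
  have rot : ∀ {a b : G}, Commute a b → ∀ t : G, a * (b * t) = b * (a * t) := by
    intro a b h t
    rw [← mul_assoc, h.eq, mul_assoc]
  have key : z⁻¹ * (x * y * x⁻¹ * y⁻¹) * z
      = (c₁ * x) * ((c₂ * y) * ((c₁ * x)⁻¹ * (c₂ * y)⁻¹)) := by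
    have e : z⁻¹ * (x * y * x⁻¹ * y⁻¹) * z
        = (z⁻¹ * x * z) * ((z⁻¹ * y * z) * ((z⁻¹ * x * z)⁻¹ * (z⁻¹ * y * z)⁻¹)) := by group
    rw [e, e₁, e₂]
  have key2 : (c₁ * x) * ((c₂ * y) * ((c₁ * x)⁻¹ * (c₂ * y)⁻¹))
      = x * y * x⁻¹ * y⁻¹ := by
    simp only [mul_inv_rev, mul_assoc]
    rw [rot h2]               -- x (c₂ t) → c₂ (x t)
    rw [rot h1.inv_left.inv_right]   -- x⁻¹ (c₁⁻¹ t) → c₁⁻¹ (x⁻¹ t)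
    rw [rot h3.inv_right]     -- y (c₁⁻¹ t) → c₁⁻¹ (y t)
    rw [rot h1.inv_right]     -- x (c₁⁻¹ t) → c₁⁻¹ (x t)
    rw [(h4.inv_left.inv_right).eq]   -- y⁻¹ c₂⁻¹ → c₂⁻¹ y⁻¹
    rw [rot h2.inv_left.inv_right]    -- x⁻¹ (c₂⁻¹ t) → c₂⁻¹ (x⁻¹ t)
    rw [rot h4.inv_right]     -- y (c₂⁻¹ t) → c₂⁻¹ (y t)
    rw [rot h2.inv_right]     -- x (c₂⁻¹ t) → c₂⁻¹ (x t)
    rw [rot h5.symm.inv_right]  -- c₂ (c₁⁻¹ t) → c₁⁻¹ (c₂ t)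
    rw [mul_inv_cancel_left, mul_inv_cancel_left]
  have hfin : z⁻¹ * (x * y * x⁻¹ * y⁻¹) * z = x * y * x⁻¹ * y⁻¹ := by
    rw [key, key2]
  have e3 : z * (z⁻¹ * (x * y * x⁻¹ * y⁻¹) * z) = (x * y * x⁻¹ * y⁻¹) * z := by group
  show z * (x * y * x⁻¹ * y⁻¹) = (x * y * x⁻¹ * y⁻¹) * z
  rw [← e3, hfin]

/-- M_C implies only finitely many strict drops of centralizers along a monotone
transfinite chain of subsets. -/
lemma drops_finite
    (hMC : ¬ ∃ A : ℕ → Set G, ∀ n, Set.centralizer (A (n + 1)) ⊂ Set.centralizer (A n))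
    (C : Ordinal.{v} → Set G) (hmono : ∀ {a b : Ordinal.{v}}, a ≤ b → C a ⊆ C b) :
    {γ : Ordinal.{v} | Set.centralizer (C (γ + 1)) ⊂ Set.centralizer (C γ)}.Finite := by
  classical
  by_contra hinf
  have hinf : {γ : Ordinal.{v} | Set.centralizer (C (γ + 1)) ⊂ Set.centralizer (C γ)}.Infinite :=
    hinf
  set T := {γ : Ordinal.{v} | Set.centralizer (C (γ + 1)) ⊂ Set.centralizer (C γ)} with hT
  have hTne : T.Nonempty := hinf.nonempty
  let f : ℕ → Ordinal.{v} := fun n => Nat.rec (motive := fun _ => Ordinal.{v}) (Ordinal.lt_wf.min T hTne)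
      (fun _ prev => if h : (T ∩ Set.Ioi prev).Nonempty then Ordinal.lt_wf.min _ h else 0) n
  have hf0 : f 0 = Ordinal.lt_wf.min T hTne := rfl
  have hfs : ∀ n, f (n + 1) =
      if h : (T ∩ Set.Ioi (f n)).Nonempty then Ordinal.lt_wf.min _ h else 0 := fun n => rfl
  have hcov : ∀ n, ∀ t ∈ T, t ≤ f n → ∃ k ≤ n, t = f k := by
    intro n
    induction n with
    | zero =>
      intro t ht hle
      have hmin := Ordinal.lt_wf.not_lt_min T ht
      exact ⟨0, le_refl 0, le_antisymm hle (not_lt.mp hmin)⟩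
    | succ n IHn =>
      intro t ht hle
      by_cases hc : t ≤ f n
      · obtain ⟨k, hk, hke⟩ := IHn t ht hc
        exact ⟨k, le_trans hk (Nat.le_succ n), hke⟩
      · push_neg at hc
        have hne : (T ∩ Set.Ioi (f n)).Nonempty := ⟨t, ht, hc⟩
        have hmin := Ordinal.lt_wf.not_lt_min (T ∩ Set.Ioi (f n)) (⟨ht, hc⟩ : t ∈ T ∩ Set.Ioi (f n))
        refine ⟨n + 1, le_refl _, le_antisymm hle ?_⟩
        rw [hfs n, dif_pos hne]
        exact not_lt.mp hmin
  have hne : ∀ n, (T ∩ Set.Ioi (f n)).Nonempty := by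
    intro n
    by_contra hemp
    rw [Set.not_nonempty_iff_eq_empty] at hemp
    have hsub : T ⊆ (fun k => f k) '' (Set.Iic n) := by
      intro t ht
      have hle : t ≤ f n := by
        by_contra hlt
        push_neg at hlt
        have hmem : t ∈ T ∩ Set.Ioi (f n) := ⟨ht, hlt⟩
        rw [hemp] at hmem
        exact absurd hmem (Set.notMem_empty t)
      obtain ⟨k, hk, hke⟩ := hcov n t ht hle
      exact ⟨k, hk, hke.symm⟩
    exact hinf (Set.Finite.subset ((Set.finite_Iic n).image _) hsub)
  have hfT : ∀ n, f n ∈ T := by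
    intro n
    cases n with
    | zero => exact Ordinal.lt_wf.min_mem T hTne
    | succ n =>
      rw [hfs n, dif_pos (hne n)]
      exact (Ordinal.lt_wf.min_mem _ (hne n)).1
  have hflt : ∀ n, f n < f (n + 1) := by
    intro n
    rw [hfs n, dif_pos (hne n)]
    exact (Ordinal.lt_wf.min_mem _ (hne n)).2
  refine hMC ⟨fun n => C (f (n + 1)), fun n => ?_⟩
  have h1 : Set.centralizer (C (f (n + 2))) ⊆ Set.centralizer (C (f (n + 1) + 1)) :=
    Set.centralizer_subset (hmono (ord_succ_le (hflt (n + 1))))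
  have h2 : Set.centralizer (C (f (n + 1) + 1)) ⊂ Set.centralizer (C (f (n + 1))) :=
    hfT (n + 1)
  exact ssubset_of_subset_of_ssubset h1 h2

end Endhelpers
theorem stmt15 {G : Type*} [Group G]
    (hMC : ¬ ∃ A : ℕ → Set G, ∀ n, Set.centralizer (A (n + 1)) ⊂ Set.centralizer (A n))
    (H : Subgroup G) (α : Ordinal) (hH : ZSet (H : Set G) α = (H : Set G)) :
    ∃ K : Subgroup G, (K : Set G) = Env (H : Set G) (α + 1) ∧ IsSolvable K := by
  classical
  set Hs : Set G := (H : Set G) with hHs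
  have hh1 : (1:G) ∈ Hs := H.one_mem
  have hhmul : ∀ {a b : G}, a ∈ Hs → b ∈ Hs → a * b ∈ Hs := fun ha hb => H.mul_mem ha hb
  have hhinv : ∀ {a : G}, a ∈ Hs → a⁻¹ ∈ Hs := fun ha => H.inv_mem ha
  obtain ⟨⟨e1, emul, einv, esub⟩, ndα, cpα, nrα⟩ := env_main hh1 @hhmul @hhinv α
  obtain ⟨⟨f1, fmul, finv, fsub⟩, ndα1, cpα1, nrα1⟩ := env_main hh1 @hhmul @hhinv (α + 1)
  let K : Subgroup G :=
    { carrier := Env Hs (α + 1)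
      mul_mem' := fun ha hb => fmul ha hb
      one_mem' := f1
      inv_mem' := fun ha => finv ha }
  refine ⟨K, rfl, ?_⟩
  -- H sits inside the top iterated centralizer
  have hHC : Hs ⊆ CIter (Env Hs α) Hs (α + 1) := by
    intro h hh
    have h1' : h ∈ ZSet Hs α := by rw [hH]; exact hh
    have h2' : h ∈ CIter (Env Hs α) Hs α :=
      ZSet_subset_CIter e1 @emul @einv esub @hhmul @hhinv α h1'
    exact CIter_mono e1 @emul @einv (le_of_lt (ord_lt_succ α)) h2'
  -- the envelope sits inside the top iterated centralizer
  have hEsub : Env Hs (α + 1) ⊆ CIter (Env Hs α) Hs (α + 1) := by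
    intro g hg
    obtain ⟨hgE, hgc⟩ := mem_Env_succ.mp hg
    rw [mem_CIter_succ]
    refine ⟨hgE, ?_, ?_⟩
    · intro ε hε b
      constructor
      · exact fun hb => ndα1 α (ord_lt_succ α) g hg ε (le_of_lt hε) b hb
      · intro hb
        have h2 := ndα1 α (ord_lt_succ α) g⁻¹ (finv hg) ε (le_of_lt hε) _ hb
        have e : g⁻¹ * (g * b * g⁻¹) * g⁻¹⁻¹ = b := by group
        rwa [e] at h2
    · intro h hh
      exact hgc h (hHC hh)
  -- commutators of envelope elements against the tower descend one level
  have hMSTAR : ∀ δ : Ordinal, δ ≤ α → ∀ g ∈ Env Hs (α + 1),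
      ∀ c ∈ CIter (Env Hs α) Hs (δ + 1), pcomm g c ∈ CIter (Env Hs α) Hs δ := by
    intro δ hδ g hg c hc
    rcases eq_or_lt_of_le hδ with rfl | hδα
    · exact (mem_Env_succ.mp hg).2 c hc
    · have hcp1 := cpα δ hδα (δ + 1) le_rfl
      have hcp0 := cpα δ hδα δ (le_of_lt (ord_lt_succ δ))
      have hgδ : g ∈ Env Hs (δ + 1) := by
        have hsucc : δ + 1 ≤ α + 1 := by
          rw [Ordinal.add_one_eq_succ, Ordinal.add_one_eq_succ]
          exact Order.succ_le_succ (le_of_lt hδα)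
        exact Env_antitone Hs (α + 1) (δ + 1) hsucc hg
      have hcδ : c ∈ CIter (Env Hs δ) Hs (δ + 1) := by rw [hcp1] at hc; exact hc.1
      have h2 : pcomm g c ∈ CIter (Env Hs δ) Hs δ := (mem_Env_succ.mp hgδ).2 c hcδ
      have h3 : pcomm g c ∈ Env Hs α := by
        have hgα : g ∈ Env Hs α := (mem_Env_succ.mp hg).1
        have hcα : c ∈ Env Hs α := CIter_subset_E _ _ e1 (δ + 1) hc
        show g⁻¹ * c⁻¹ * g * c ∈ Env Hs α
        exact emul (emul (emul (einv hgα) (einv hcα)) hgα) hcα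
      rw [hcp0]
      exact ⟨h2, h3⟩
  have hcoc : ∀ δ : Ordinal, δ ≤ α → ∀ x ∈ Env Hs (α + 1),
      ∀ z ∈ CIter (Env Hs α) Hs (δ + 1),
        z⁻¹ * x * z * x⁻¹ ∈ CIter (Env Hs α) Hs δ := by
    intro δ hδ x hx z hz
    have h2 := hMSTAR δ hδ x⁻¹ (finv hx) z hz
    have h3 := CIter_inv e1 @emul @einv h2
    have e : (pcomm x⁻¹ z)⁻¹ = z⁻¹ * x * z * x⁻¹ := by unfold pcomm; group
    rwa [e] at h3
  -- drop points of the centralizer chain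
  set T : Set Ordinal := {γ | Set.centralizer (CIter (Env Hs α) Hs (γ + 1))
      ⊂ Set.centralizer (CIter (Env Hs α) Hs γ)} with hTdef
  have hTfin : T.Finite :=
    drops_finite hMC _ (fun {a b} hab => CIter_mono e1 @emul @einv hab)
  let nT : Ordinal → ℕ := fun γ => (T ∩ Set.Iio γ).ncard
  have hnTmono : ∀ {a b : Ordinal}, a ≤ b → nT a ≤ nT b := by
    intro a b hab
    exact Set.ncard_le_ncard (Set.inter_subset_inter_right T (Set.Iio_subset_Iio hab))
      (hTfin.subset Set.inter_subset_left)
  have hnT_succ_mem : ∀ δ, δ ∈ T → nT (δ + 1) = nT δ + 1 := by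
    intro δ hδ
    show (T ∩ Set.Iio (δ + 1)).ncard = (T ∩ Set.Iio δ).ncard + 1
    have he : T ∩ Set.Iio (δ + 1) = insert δ (T ∩ Set.Iio δ) := by
      ext μ
      simp only [Set.mem_inter_iff, Set.mem_Iio, Set.mem_insert_iff]
      constructor
      · rintro ⟨hμT, hμlt⟩
        rcases eq_or_lt_of_le (ord_lt_succ_iff.mp hμlt) with h | h
        · exact Or.inl h
        · exact Or.inr ⟨hμT, h⟩
      · rintro (h | ⟨hμT, hμlt⟩)
        · rw [h]; exact ⟨hδ, ord_lt_succ δ⟩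
        · exact ⟨hμT, lt_trans hμlt (ord_lt_succ δ)⟩
    rw [he, Set.ncard_insert_of_notMem (by simp) (hTfin.subset Set.inter_subset_left)]
  have hnT_succ_nomem : ∀ δ, δ ∉ T → nT (δ + 1) = nT δ := by
    intro δ hδ
    show (T ∩ Set.Iio (δ + 1)).ncard = (T ∩ Set.Iio δ).ncard
    congr 1
    ext μ
    simp only [Set.mem_inter_iff, Set.mem_Iio]
    constructor
    · rintro ⟨hμT, hμlt⟩
      rcases eq_or_lt_of_le (ord_lt_succ_iff.mp hμlt) with h | h
      · subst h; exact absurd hμT hδ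
      · exact ⟨hμT, h⟩
    · rintro ⟨hμT, hμlt⟩
      exact ⟨hμT, lt_trans hμlt (ord_lt_succ δ)⟩
  -- the commutator chain of K inside G
  let Dch : ℕ → Subgroup G :=
    fun n => Nat.rec (motive := fun _ => Subgroup G) K (fun _ P => ⁅P, P⁆) n
  have hDs : ∀ n, Dch (n + 1) = ⁅Dch n, Dch n⁆ := fun n => rfl
  have hDstep : ∀ n, Dch (n + 1) ≤ Dch n := by
    intro n
    rw [hDs n]
    refine Subgroup.commutator_le.mpr ?_
    intro a ha b hb
    rw [commutatorElement_def]
    exact mul_mem (mul_mem (mul_mem ha hb) (inv_mem ha)) (inv_mem hb)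
  have hDanti : Antitone Dch := antitone_nat_of_succ_le hDstep
  have hDK : ∀ n, Dch n ≤ K := fun n => hDanti (Nat.zero_le n)
  -- main transfinite induction : the commutator chain centralizes the tower
  have hMAIN : ∀ γ : Ordinal, γ ≤ α + 1 →
      ((Dch (nT γ) : Set G)) ⊆ Set.centralizer (CIter (Env Hs α) Hs γ) := by
    intro γ
    induction γ using Ordinal.induction with
    | h γ IHm =>
    intro hγ
    rcases Ordinal.zero_or_succ_or_isSuccLimit γ with h0 | ⟨δ, hδ⟩ | hlim
    · subst h0
      intro x _
      rw [CIter_zero]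
      rintro s rfl
      simp
    · rw [← Ordinal.add_one_eq_succ] at hδ; subst hδ
      have hδα : δ ≤ α := ord_lt_succ_iff.mp (lt_of_lt_of_le (ord_lt_succ δ) hγ)
      have hδγ : δ < δ + 1 := ord_lt_succ δ
      have hδle : δ ≤ α + 1 := le_trans hδα (le_of_lt (ord_lt_succ α))
      have IHδ := IHm δ hδγ hδle
      by_cases hdT : δ ∈ T
      · rw [hnT_succ_mem δ hdT]
        have hle : Dch (nT δ + 1) ≤ Subgroup.centralizer (CIter (Env Hs α) Hs (δ + 1)) := by
          rw [hDs (nT δ)]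
          refine Subgroup.commutator_le.mpr ?_
          intro x hx y hy
          rw [commutatorElement_def, Subgroup.mem_centralizer_iff]
          intro z hz
          have hxK : x ∈ Env Hs (α + 1) := hDK (nT δ) hx
          have hyK : y ∈ Env Hs (α + 1) := hDK (nT δ) hy
          have hxC : x ∈ Set.centralizer (CIter (Env Hs α) Hs δ) := IHδ hx
          have hyC : y ∈ Set.centralizer (CIter (Env Hs α) Hs δ) := IHδ hy
          have hc₁ : z⁻¹ * x * z * x⁻¹ ∈ CIter (Env Hs α) Hs δ := hcoc δ hδα x hxK z hz
          have hc₂ : z⁻¹ * y * z * y⁻¹ ∈ CIter (Env Hs α) Hs δ := hcoc δ hδα y hyK z hz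
          have hznorm : ∀ s ∈ CIter (Env Hs α) Hs δ, z * s * z⁻¹ ∈ CIter (Env Hs α) Hs δ :=
            fun s hs => CIter_conj e1 @emul @einv hz hs
          have hgen₁ : z⁻¹ * x * z * x⁻¹ ∈ Set.centralizer (CIter (Env Hs α) Hs δ) :=
            gen_commute hxC hznorm
          have e₁ : z⁻¹ * x * z = (z⁻¹ * x * z * x⁻¹) * x := by group
          have e₂ : z⁻¹ * y * z = (z⁻¹ * y * z * y⁻¹) * y := by group
          have h1 : Commute x (z⁻¹ * x * z * x⁻¹) := (hxC _ hc₁).symm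
          have h2 : Commute x (z⁻¹ * y * z * y⁻¹) := (hxC _ hc₂).symm
          have h3 : Commute y (z⁻¹ * x * z * x⁻¹) := (hyC _ hc₁).symm
          have h4 : Commute y (z⁻¹ * y * z * y⁻¹) := (hyC _ hc₂).symm
          have h5 : Commute (z⁻¹ * x * z * x⁻¹) (z⁻¹ * y * z * y⁻¹) := (hgen₁ _ hc₂).symm
          exact comm_step e₁ e₂ h1 h2 h3 h4 h5
        intro w hw
        exact hle hw
      · rw [hnT_succ_nomem δ hdT]
        have hsub2 : Set.centralizer (CIter (Env Hs α) Hs (δ + 1))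
            ⊆ Set.centralizer (CIter (Env Hs α) Hs δ) :=
          Set.centralizer_subset (CIter_mono e1 @emul @einv (le_of_lt (ord_lt_succ δ)))
        have heq : Set.centralizer (CIter (Env Hs α) Hs (δ + 1))
            = Set.centralizer (CIter (Env Hs α) Hs δ) := by
          rcases lt_or_eq_of_le hsub2 with hlt | he
          · exact absurd hlt hdT
          · exact he
        rw [heq]
        exact IHδ
    · intro w hw z hz
      rw [mem_CIter_limit hlim] at hz
      obtain ⟨δ, hδlt, hz⟩ := hz
      have hδle : δ ≤ α + 1 := le_trans (le_of_lt hδlt) hγ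
      have hw' : w ∈ Dch (nT δ) := hDanti (hnTmono (le_of_lt hδlt)) hw
      exact IHm δ hδlt hδle hw' z hz
  -- the chain terminates
  have hfinal : Dch (nT (α + 1) + 1) = ⊥ := by
    rw [hDs (nT (α + 1)), eq_bot_iff]
    refine Subgroup.commutator_le.mpr ?_
    intro x hx y hy
    have hxC := hMAIN (α + 1) le_rfl hx
    have hyE : y ∈ CIter (Env Hs α) Hs (α + 1) := hEsub (hDK _ hy)
    have hcomm : x * y = y * x := (hxC y hyE).symm
    rw [Subgroup.mem_bot, commutatorElement_def]
    calc x * y * x⁻¹ * y⁻¹ = y * x * x⁻¹ * y⁻¹ := by rw [hcomm]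
      _ = 1 := by group
  -- derived series of K maps into the chain
  have hds : ∀ n, Subgroup.map K.subtype (derivedSeries K n) ≤ Dch n := by
    intro n
    induction n with
    | zero =>
      rw [derivedSeries_zero, ← MonoidHom.range_eq_map, Subgroup.range_subtype]
      exact le_refl K
    | succ n IHn =>
      rw [derivedSeries_succ, Subgroup.map_commutator, hDs n]
      exact Subgroup.commutator_mono IHn IHn
  have hzero : derivedSeries K (nT (α + 1) + 1) = ⊥ := by
    have h2 := hds (nT (α + 1) + 1)
    rw [hfinal, le_bot_iff, Subgroup.map_eq_bot_iff, Subgroup.ker_subtype, le_bot_iff] at h2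
    exact h2
  exact ⟨⟨_, hzero⟩⟩
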